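/- Let Ω ⊆ ℂ be a domain with 0 ∈ Ω covered by the unit disk 𝔻. Then there exists at most one holomorphic covering map f : 𝔻 → Ω with f(0) = 0 and f'(0) = λ for some real λ > 0. That is, if f and g are both holomorphic covering maps from 𝔻 onto Ω fixing 0 with positive real derivative at 0, then f = g. -/

import Mathlib

open CategoryTheory FundamentalGroupoid Metric Set

open Metric Set

section Lifting

variable {E X : Type} [TopologicalSpace E] [TopologicalSpace X]

/-- Local lift through a trivialization: the section through a given point `e`. -/
lemma section_lift {p : E → X} {I : Type*} [TopologicalSpace I] (t : Bundle.Trivialization I p)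
    (e : E) (he : p e ∈ t.baseSet) {W : Set ℂ} {γ : ℂ → X} (hγ : ContinuousOn γ W)
    (hW : ∀ z ∈ W, γ z ∈ t.baseSet) :
    ∃ s : ℂ → E, ContinuousOn s W ∧ (∀ z ∈ W, p (s z) = γ z) ∧
      ∀ z ∈ W, γ z = p e → s z = e := by
  refine ⟨fun z => t.toOpenPartialHomeomorph.symm (γ z, (t e).2), ?_, ?_, ?_⟩
  · refine t.toOpenPartialHomeomorph.continuousOn_symm.comp
      (hγ.prodMk continuousOn_const) fun z hz => ?_
    rw [t.target_eq]
    exact ⟨hW z hz, mem_univ _⟩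
  · intro z hz
    exact t.proj_symm_apply (by rw [t.target_eq]; exact ⟨hW z hz, mem_univ _⟩)
  · intro z hz hze
    have hes : e ∈ t.source := t.mem_source.2 he
    show t.toOpenPartialHomeomorph.symm (γ z, (t e).2) = e
    rw [hze]
    have h2 := t.symm_apply_mk_proj hes
    exact h2

end Lifting

section Lifting2

variable {E X : Type} [TopologicalSpace E] [TopologicalSpace X]

lemma lift_unique {p : E → X} (hp : IsCoveringMap p) {s : Set ℂ} (hs : Convex ℝ s)
    {γ : ℂ → X} {h₁ h₂ : ℂ → E} (hc₁ : ContinuousOn h₁ s) (hc₂ : ContinuousOn h₂ s)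
    (hl₁ : ∀ z ∈ s, p (h₁ z) = γ z) (hl₂ : ∀ z ∈ s, p (h₂ z) = γ z) {a : ℂ} (ha : a ∈ s)
    (hae : h₁ a = h₂ a) : EqOn h₁ h₂ s :=
  hp.eqOn_of_comp_eqOn hs.isPreconnected hc₁ hc₂
    (fun z hz => (hl₁ z hz).trans (hl₂ z hz).symm) ha hae

/-- Lifting of a continuous map on the unit disk through a covering map. -/
theorem disk_lift {p : E → X} (hp : IsCoveringMap p) {γ : ℂ → X}
    (hγ : ContinuousOn γ (ball 0 1)) (e₀ : E) (he₀ : p e₀ = γ 0) :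
    ∃ h : ℂ → E, ContinuousOn h (ball 0 1) ∧ h 0 = e₀ ∧ ∀ z ∈ ball 0 1, p (h z) = γ z := by
  set P : ℝ → Prop := fun r =>
    ∃ h : ℂ → E, ContinuousOn h (ball 0 r) ∧ h 0 = e₀ ∧ ∀ z ∈ ball 0 r, p (h z) = γ z with hP
  suffices h1 : P 1 by exact h1
  -- monotonicity
  have hmono : ∀ r r' : ℝ, r' ≤ r → P r → P r' := by
    rintro r r' hle ⟨h, hc, h0, hl⟩
    exact ⟨h, hc.mono (ball_subset_ball hle), h0, fun z hz => hl z (ball_subset_ball hle hz)⟩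
  -- base case
  have hbase : ∃ r₀ : ℝ, 0 < r₀ ∧ r₀ < 1 ∧ P r₀ := by
    have hec := hp (γ 0)
    haveI : Nonempty ↑(p ⁻¹' {γ 0}) := ⟨⟨e₀, he₀⟩⟩
    set t := hec.toTrivialization with ht
    have hmem : γ 0 ∈ t.baseSet := hec.mem_toTrivialization_baseSet
    have hopen : IsOpen (ball (0:ℂ) 1 ∩ γ ⁻¹' t.baseSet) :=
      hγ.isOpen_inter_preimage isOpen_ball t.open_baseSet
    have h0mem : (0:ℂ) ∈ ball (0:ℂ) 1 ∩ γ ⁻¹' t.baseSet :=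
      ⟨mem_ball_self one_pos, hmem⟩
    obtain ⟨ε, hε, hball⟩ := Metric.isOpen_iff.1 hopen 0 h0mem
    refine ⟨min (ε/2) (1/2), lt_min (half_pos hε) one_half_pos,
      (min_le_right _ _).trans_lt one_half_lt_one, ?_⟩
    have hsub : ball (0:ℂ) (min (ε/2) (1/2)) ⊆ ball (0:ℂ) 1 ∩ γ ⁻¹' t.baseSet :=
      (ball_subset_ball ((min_le_left _ _).trans (half_le_self hε.le))).trans hball
    obtain ⟨s, hsc, hsl, hse⟩ := section_lift t e₀ (by rw [he₀]; exact hmem)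
      (hγ.mono fun z hz => (hsub hz).1) (fun z hz => (hsub hz).2)
    exact ⟨s, hsc, hse 0 (mem_ball_self (lt_min (half_pos hε) one_half_pos)) he₀.symm, hsl⟩
  -- closedness under sup
  have hclosed : ∀ R : ℝ, 0 < R → (∀ r, 0 < r → r < R → P r) → P R := by
    intro R hR hc
    classical
    set F : ℝ → ℂ → E := fun r => if hr : 0 < r ∧ r < R then (hc r hr.1 hr.2).choose
      else fun _ => e₀ with hFdef
    have hF : ∀ r, 0 < r → r < R → ContinuousOn (F r) (ball 0 r) ∧ F r 0 = e₀ ∧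
        ∀ z ∈ ball 0 r, p (F r z) = γ z := by
      intro r h1 h2
      have : F r = (hc r h1 h2).choose := dif_pos ⟨h1, h2⟩
      rw [this]
      exact (hc r h1 h2).choose_spec
    have hcompat : ∀ r₁ r₂ : ℝ, 0 < r₁ → r₁ ≤ r₂ → r₂ < R →
        EqOn (F r₁) (F r₂) (ball 0 r₁) := by
      intro r₁ r₂ h1 h12 h2
      obtain ⟨hc1, h01, hl1⟩ := hF r₁ h1 (h12.trans_lt h2)
      obtain ⟨hc2, h02, hl2⟩ := hF r₂ (h1.trans_le h12) h2
      exact lift_unique hp (convex_ball _ _) hc1 (hc2.mono (ball_subset_ball h12)) hl1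
        (fun z hz => hl2 z (ball_subset_ball h12 hz)) (mem_ball_self h1) (h01.trans h02.symm)
    set s : ℂ → ℝ := fun z => (‖z‖ + R) / 2 with hs
    have hs0 : ∀ z : ℂ, 0 < s z := fun z => by positivity
    have hsR : ∀ z ∈ ball (0:ℂ) R, s z < R := by
      intro z hz
      rw [mem_ball_zero_iff] at hz
      simp only [hs]
      linarith
    have hzs : ∀ z ∈ ball (0:ℂ) R, z ∈ ball 0 (s z) := by
      intro z hz
      rw [mem_ball_zero_iff] at hz ⊢
      simp only [hs]
      linarith
    have hkey : ∀ z₀ ∈ ball (0:ℂ) R, EqOn (fun z => F (s z) z) (F (s z₀)) (ball 0 (s z₀)) := by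
      intro z₀ hz₀ z hz
      rw [mem_ball_zero_iff] at hz
      have hz₀R : s z₀ < R := hsR z₀ hz₀
      have hzR : z ∈ ball (0:ℂ) R := mem_ball_zero_iff.2 (hz.trans hz₀R)
      have hszR : s z < R := hsR z hzR
      rcases le_total (s z) (s z₀) with hle | hle
      · exact hcompat (s z) (s z₀) (hs0 z) hle hz₀R (hzs z hzR)
      · exact (hcompat (s z₀) (s z) (hs0 z₀) hle hszR (mem_ball_zero_iff.2 hz)).symm
    refine ⟨fun z => F (s z) z, ?_, ?_, ?_⟩
    · intro z₀ hz₀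
      have hcontF : ContinuousAt (F (s z₀)) z₀ :=
        ((hF (s z₀) (hs0 z₀) (hsR z₀ hz₀)).1).continuousAt
          (isOpen_ball.mem_nhds (hzs z₀ hz₀))
      have heq : (fun z => F (s z) z) =ᶠ[nhds z₀] F (s z₀) :=
        Filter.eventuallyEq_of_mem (isOpen_ball.mem_nhds (hzs z₀ hz₀)) (hkey z₀ hz₀)
      exact (hcontF.congr heq.symm).continuousWithinAt
    · have h0s : s 0 = R / 2 := by simp [hs]
      have := (hF (s 0) (hs0 0) (by rw [h0s]; linarith)).2.1
      exact this
    · intro z hz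
      exact (hF (s z) (hs0 z) (hsR z hz)).2.2 z (hzs z hz)
  -- extension step
  have hext : ∀ R : ℝ, 0 < R → R < 1 → P R → ∃ R', R < R' ∧ R' < 1 ∧ P R' := by
    intro R hR hR1 ⟨h, hhc, hh0, hhl⟩
    classical
    set R₁ : ℝ := (R + 1) / 2 with hR₁def
    have hRR₁ : R < R₁ := by simp only [hR₁def]; linarith
    have hR₁1 : R₁ < 1 := by simp only [hR₁def]; linarith
    -- Lebesgue number for the cover of the closed ball of radius R₁ by evenly covered preimages
    have hcover : closedBall (0:ℂ) R₁ ⊆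
        ⋃ x : closedBall (0:ℂ) R₁, (ball (0:ℂ) 1 ∩ γ ⁻¹' (hp (γ x)).2.choose) := by
      intro x hx
      refine mem_iUnion.2 ⟨⟨x, hx⟩, ?_, ?_⟩
      · rw [mem_closedBall_zero_iff] at hx
        exact mem_ball_zero_iff.2 (hx.trans_lt hR₁1)
      · exact (hp (γ x)).2.choose_spec.1
    obtain ⟨δ, hδ, hLeb⟩ := lebesgue_number_lemma_of_metric (isCompact_closedBall _ _)
      (fun x : closedBall (0:ℂ) R₁ => hγ.isOpen_inter_preimage isOpen_ball
        (hp (γ (x:ℂ))).2.choose_spec.2.1) hcover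
    set δ' : ℝ := min δ (min R (1 - R)) with hδ'def
    have hδ'0 : 0 < δ' := lt_min hδ (lt_min hR (by linarith))
    have hδ'δ : δ' ≤ δ := min_le_left _ _
    have hδ'R : δ' ≤ R := (min_le_right _ _).trans (min_le_left _ _)
    have hδ'1R : δ' ≤ 1 - R := (min_le_right _ _).trans (min_le_right _ _)
    set m : ℝ := δ' / 4 with hmdef
    have hm0 : 0 < m := by positivity
    set R' : ℝ := R + m with hR'def
    have hRR' : R < R' := by simp only [hR'def]; linarith
    have hR'1 : R' < 1 := by simp only [hR'def, hmdef]; linarith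
    have hR'R₁ : R' ≤ R₁ := by simp only [hR'def, hmdef, hR₁def]; linarith
    have h2mR : 2 * m < R := by simp only [hmdef]; linarith
    -- the retraction to the circle of radius R - m
    set b : ℂ → ℂ := fun x => (((R - m) * ‖x‖⁻¹ : ℝ)) • x with hbdef
    have hbnorm : ∀ x : ℂ, x ≠ 0 → ‖b x‖ = R - m := by
      intro x hx
      have hxn : ‖x‖ ≠ 0 := norm_ne_zero_iff.2 hx
      simp only [hbdef, norm_smul, Real.norm_eq_abs]
      have hRm : (0:ℝ) ≤ R - m := by simp only [hmdef]; linarith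
      rw [abs_of_nonneg (mul_nonneg hRm (inv_nonneg.2 (norm_nonneg x)))]
      rw [mul_assoc, inv_mul_cancel₀ hxn, mul_one]
    have hbdist : ∀ x : ℂ, x ≠ 0 → ‖x - b x‖ = |‖x‖ - (R - m)| := by
      intro x hx
      have hxn : (0:ℝ) < ‖x‖ := norm_pos_iff.2 hx
      have hxe : x - b x = ((1 - (R - m) * ‖x‖⁻¹ : ℝ)) • x := by
        simp only [hbdef, sub_smul, one_smul]
      rw [hxe, norm_smul, Real.norm_eq_abs]
      rw [show (1 - (R - m) * ‖x‖⁻¹ : ℝ) = (‖x‖ - (R - m)) / ‖x‖ by rw [eq_div_iff hxn.ne', sub_mul, one_mul, mul_assoc, inv_mul_cancel₀ hxn.ne', mul_one]]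
      rw [abs_div, abs_of_pos hxn, div_mul_cancel₀ _ hxn.ne']
    -- the annulus condition
    set C : ℂ → Prop := fun z => R - 2 * m ≤ ‖z‖ ∧ ‖z‖ < R' with hCdef
    have hCne : ∀ z, C z → z ≠ 0 := by
      intro z hz hz0
      subst hz0
      simp only [hCdef, norm_zero] at hz
      linarith [hz.1]
    have hCbd : ∀ z, C z → ‖z - b z‖ < δ' ∧ ‖b z‖ = R - m := by
      intro z hz
      have hbz := hbnorm z (hCne z hz)
      refine ⟨?_, hbz⟩
      rw [hbdist z (hCne z hz), abs_sub_lt_iff]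
      constructor
      · have := hz.2; simp only [hR'def, hmdef] at this ⊢; linarith
      · have := hz.1; simp only [hmdef] at this ⊢; linarith
    set U : ℂ → Set ℂ := fun z => ball (b z) δ' ∩ ball 0 R' with hUdef
    have hUsub1 : ∀ z, C z → U z ⊆ ball (0:ℂ) 1 := by
      intro z hz w hw
      exact ball_subset_ball (le_of_lt hR'1) hw.2
    have hzU : ∀ z, C z → z ∈ U z := by
      intro z hz
      exact ⟨mem_ball_iff_norm.2 (hCbd z hz).1, mem_ball_zero_iff.2 hz.2⟩
    have hbU : ∀ z, C z → b z ∈ U z ∩ ball 0 R := by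
      intro z hz
      have hbz := (hCbd z hz).2
      refine ⟨⟨mem_ball_self hδ'0, mem_ball_zero_iff.2 ?_⟩, mem_ball_zero_iff.2 ?_⟩
      · rw [hbz]; linarith
      · rw [hbz]; linarith
    -- local sections around the annulus
    have hsec : ∀ z, C z → ∃ s : ℂ → E, ContinuousOn s (U z) ∧
        (∀ w ∈ U z, p (s w) = γ w) ∧ s (b z) = h (b z) := by
      intro z hz
      have hbK : b z ∈ closedBall (0:ℂ) R₁ := by
        rw [mem_closedBall_zero_iff, (hCbd z hz).2]
        linarith
      obtain ⟨i, hi⟩ := hLeb (b z) hbK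
      have hUi : U z ⊆ ball (0:ℂ) 1 ∩ γ ⁻¹' (hp (γ (i:ℂ))).2.choose := by
        intro w hw
        exact hi (ball_subset_ball hδ'δ hw.1)
      have hbball : b z ∈ ball (0:ℂ) R := (hbU z hz).2
      have hpb : p (h (b z)) = γ (b z) := hhl (b z) hbball
      have hbbase : p (h (b z)) ∈ (hp (γ (i:ℂ))).2.choose := by
        rw [hpb]
        exact (hUi (hbU z hz).1).2
      haveI : Nonempty ↑(p ⁻¹' {γ (i:ℂ)}) :=
        ⟨((hp (γ (i:ℂ))).2.choose_spec.2.2.2.choose ⟨h (b z), hbbase⟩).2⟩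
      obtain ⟨s, hsc, hsl, hse⟩ := section_lift ((hp (γ (i:ℂ))).toTrivialization) (h (b z))
        hbbase (hγ.mono (hUsub1 z hz)) (fun w hw => (hUi hw).2)
      exact ⟨s, hsc, hsl, hse (b z) (hbU z hz).1 hpb.symm⟩
    set S : ℂ → ℂ → E := fun z => if hz : C z then (hsec z hz).choose else fun _ => e₀
      with hSdef
    have hS : ∀ z (hz : C z), ContinuousOn (S z) (U z) ∧
        (∀ w ∈ U z, p (S z w) = γ w) ∧ S z (b z) = h (b z) := by
      intro z hz
      have : S z = (hsec z hz).choose := dif_pos hz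
      rw [this]
      exact (hsec z hz).choose_spec
    -- sections agree with h on the overlap with the old ball
    have hSh : ∀ z (hz : C z), EqOn (S z) h (U z ∩ ball 0 R) := by
      intro z hz
      obtain ⟨hsc, hsl, hse⟩ := hS z hz
      exact lift_unique hp (((convex_ball _ _).inter (convex_ball _ _)).inter (convex_ball _ _))
        (hsc.mono inter_subset_left) (hhc.mono inter_subset_right)
        (fun w hw => hsl w hw.1) (fun w hw => hhl w hw.2) (hbU z hz) hse
    -- sections agree with each other on overlaps
    have hSS : ∀ z z' (hz : C z) (hz' : C z') (w : ℂ), w ∈ U z ∩ U z' → S z w = S z' w := by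
      intro z z' hz hz' w hw
      set mid : ℂ := (b z + b z') / 2 with hmid
      have hd1 : ‖b z - b z'‖ < 2 * δ' := by
        have h1 : ‖w - b z‖ < δ' := mem_ball_iff_norm.1 hw.1.1
        have h2 : ‖w - b z'‖ < δ' := mem_ball_iff_norm.1 hw.2.1
        calc ‖b z - b z'‖ = ‖(w - b z') - (w - b z)‖ := by ring_nf
          _ ≤ ‖w - b z'‖ + ‖w - b z‖ := norm_sub_le _ _
          _ < 2 * δ' := by linarith
      have hmid1 : mid ∈ ball (b z) δ' := by
        rw [mem_ball_iff_norm, hmid]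
        have : (b z + b z') / 2 - b z = -((b z - b z') / 2) := by ring
        rw [this, norm_neg, norm_div]
        simp only [Complex.norm_ofNat]
        linarith [hd1]
      have hmid2 : mid ∈ ball (b z') δ' := by
        rw [mem_ball_iff_norm, hmid]
        have : (b z + b z') / 2 - b z' = (b z - b z') / 2 := by ring
        rw [this, norm_div]
        simp only [Complex.norm_ofNat]
        linarith [hd1]
      have hmidR : mid ∈ ball (0:ℂ) R ∩ ball (0:ℂ) R' := by
        have hn : ‖mid‖ ≤ R - m := by
          rw [hmid]
          calc ‖(b z + b z') / 2‖ ≤ (‖b z‖ + ‖b z'‖) / 2 := by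
                rw [norm_div]
                simp only [Complex.norm_ofNat]
                linarith [norm_add_le (b z) (b z')]
            _ = R - m := by rw [(hCbd z hz).2, (hCbd z' hz').2]; ring
        constructor
        · exact mem_ball_zero_iff.2 (hn.trans_lt (by linarith))
        · exact mem_ball_zero_iff.2 (hn.trans_lt (by linarith))
      have hmidU : mid ∈ (U z ∩ U z') := ⟨⟨hmid1, hmidR.2⟩, ⟨hmid2, hmidR.2⟩⟩
      have heq1 : S z mid = h mid := hSh z hz ⟨hmidU.1, hmidR.1⟩
      have heq2 : S z' mid = h mid := hSh z' hz' ⟨hmidU.2, hmidR.1⟩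
      obtain ⟨hsc, hsl, -⟩ := hS z hz
      obtain ⟨hsc', hsl', -⟩ := hS z' hz'
      exact lift_unique hp (((convex_ball _ _).inter (convex_ball _ _)).inter
          ((convex_ball _ _).inter (convex_ball _ _)))
        (hsc.mono inter_subset_left) (hsc'.mono inter_subset_right)
        (fun v hv => hsl v hv.1) (fun v hv => hsl' v hv.2) hmidU
        (heq1.trans heq2.symm) hw
    -- the glued lift
    set H : ℂ → E := fun w => if ‖w‖ < R - 2 * m then h w else S w w with hHdef
    have hCof : ∀ w : ℂ, ¬ ‖w‖ < R - 2 * m → w ∈ ball (0:ℂ) R' → C w := by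
      intro w hw hwR'
      exact ⟨not_lt.1 hw, mem_ball_zero_iff.1 hwR'⟩
    have hkey : ∀ z₀ (hz₀ : C z₀), EqOn H (S z₀) (U z₀) := by
      intro z₀ hz₀ w hw
      simp only [hHdef]
      by_cases hwlt : ‖w‖ < R - 2 * m
      · rw [if_pos hwlt]
        exact (hSh z₀ hz₀ ⟨hw, mem_ball_zero_iff.2 (hwlt.trans (by linarith))⟩).symm
      · rw [if_neg hwlt]
        have hwC : C w := hCof w hwlt hw.2
        exact hSS w z₀ hwC hz₀ w ⟨hzU w hwC, hw⟩
    refine ⟨R', hRR', hR'1, ⟨H, ?_, ?_, ?_⟩⟩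
    · intro w₀ hw₀
      by_cases hlt : ‖w₀‖ < R - 2 * m
      · have hsub : ball (0:ℂ) (R - 2*m) ⊆ ball (0:ℂ) R := ball_subset_ball (by linarith)
        have hca : ContinuousAt h w₀ :=
          hhc.continuousAt (isOpen_ball.mem_nhds (hsub (mem_ball_zero_iff.2 hlt)))
        have heq : H =ᶠ[nhds w₀] h := by
          refine Filter.eventuallyEq_of_mem (isOpen_ball.mem_nhds (mem_ball_zero_iff.2 hlt)) ?_
          intro w hw
          simp only [hHdef]
          rw [if_pos (mem_ball_zero_iff.1 hw)]
        exact (hca.congr heq.symm).continuousWithinAt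
      · have hwC : C w₀ := hCof w₀ hlt hw₀
        have hUopen : IsOpen (U w₀) := isOpen_ball.inter isOpen_ball
        have hca : ContinuousAt (S w₀) w₀ :=
          (hS w₀ hwC).1.continuousAt (hUopen.mem_nhds (hzU w₀ hwC))
        have heq : H =ᶠ[nhds w₀] S w₀ :=
          Filter.eventuallyEq_of_mem (hUopen.mem_nhds (hzU w₀ hwC)) (hkey w₀ hwC)
        exact (hca.congr heq.symm).continuousWithinAt
    · simp only [hHdef]
      rw [if_pos (by rw [norm_zero]; linarith)]
      exact hh0
    · intro w hw
      simp only [hHdef]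
      by_cases hlt : ‖w‖ < R - 2 * m
      · rw [if_pos hlt]
        exact hhl w (mem_ball_zero_iff.2 (hlt.trans (by linarith)))
      · rw [if_neg hlt]
        have hwC : C w := hCof w hlt hw
        exact (hS w hwC).2.1 w (hzU w hwC)
  -- assemble via sSup
  obtain ⟨r₀, hr₀0, hr₀1, hPr₀⟩ := hbase
  set T : Set ℝ := {r | r ≤ 1 ∧ P r} with hT
  have hTne : T.Nonempty := ⟨r₀, hr₀1.le, hPr₀⟩
  have hTbdd : BddAbove T := ⟨1, fun r hr => hr.1⟩
  set R := sSup T with hRdef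
  have hRle1 : R ≤ 1 := csSup_le hTne fun r hr => hr.1
  have hr₀R : r₀ ≤ R := le_csSup hTbdd ⟨hr₀1.le, hPr₀⟩
  have hR0 : 0 < R := hr₀0.trans_le hr₀R
  have hbelow : ∀ r, 0 < r → r < R → P r := by
    intro r hr hrR
    obtain ⟨t, htT, hrt⟩ := exists_lt_of_lt_csSup hTne hrR
    exact hmono t r hrt.le htT.2
  have hPR : P R := hclosed R hR0 hbelow
  rcases lt_or_eq_of_le hRle1 with hlt | heq
  · obtain ⟨R', hRR', hR'1, hPR'⟩ := hext R hR0 hlt hPR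
    exact absurd (le_csSup hTbdd ⟨hR'1.le, hPR'⟩) (not_le.2 hRR')
  · rwa [heq] at hPR

end Lifting2

section InjPart

open Metric Set Filter Complex

/-- If a holomorphic function is injective on a neighborhood of `w`, then its derivative
at `w` is nonzero. -/
lemma deriv_ne_zero_of_injOn {f : ℂ → ℂ} {w : ℂ} (hf : AnalyticAt ℂ f w)
    {U : Set ℂ} (hU : U ∈ nhds w) (inj : Set.InjOn f U) : deriv f w ≠ 0 := by
  intro hderiv
  have hUev : ∀ᶠ z in nhds w, z ∈ U := hU
  set F : ℂ → ℂ := fun z => f z - f w with hFdef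
  have hFa : AnalyticAt ℂ F w := hf.sub analyticAt_const
  have hFw : F w = 0 := sub_self _
  -- F is not eventually zero
  have hno : ¬ (∀ᶠ z in nhds w, F z = 0) := by
    intro hev
    have h1 : ∀ᶠ z in nhdsWithin w {w}ᶜ, (z ∈ U ∧ F z = 0) ∧ z ≠ w :=
      (((hUev.and hev).filter_mono nhdsWithin_le_nhds).and self_mem_nhdsWithin)
    obtain ⟨z, ⟨hzU, hzF⟩, hzw⟩ := h1.exists
    have : f z = f w := by
      have := hzF
      simp only [hFdef, sub_eq_zero] at this
      exact this
    exact hzw (inj hzU (mem_of_mem_nhds hU) this)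
  -- the order of vanishing is a finite natural number
  have hne : analyticOrderAt F w ≠ ⊤ := fun h => hno (analyticOrderAt_eq_top.1 h)
  lift analyticOrderAt F w to ℕ using hne with n hn
  obtain ⟨g, hg, hgw, hfac⟩ := (hFa.analyticOrderAt_eq_natCast (n := n)).1 hn.symm
  -- n ≥ 2
  have hn0 : n ≠ 0 := by
    intro h0
    subst h0
    have := hfac.self_of_nhds
    simp only [pow_zero, one_smul, hFw] at this
    exact hgw this.symm
  have hn1 : n ≠ 1 := by
    intro h1
    subst h1
    have hH : HasDerivAt (fun z => (z - w) ^ 1 • g z) (g w) w := by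
      have h1 : HasDerivAt (fun z : ℂ => z - w) 1 w := (hasDerivAt_id w).sub_const w
      have h2 : HasDerivAt g (deriv g w) w := hg.differentiableAt.hasDerivAt
      have := (h1.mul h2)
      simp only [pow_one, smul_eq_mul]
      simpa [Pi.mul_def] using this
    have hFd : HasDerivAt F (g w) w := by
      refine hH.congr_of_eventuallyEq ?_
      filter_upwards [hfac] with z hz using hz
    have hF0 : HasDerivAt F 0 w := by
      have h3 := (hf.differentiableAt.hasDerivAt).sub_const (f w)
      rwa [hderiv] at h3
    exact hgw (hFd.unique hF0)
  have hn2 : 2 ≤ n := by omega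
  have hnC : (n : ℂ) ≠ 0 := Nat.cast_ne_zero.2 hn0
  have hnR : (0:ℝ) < n := Nat.cast_pos.2 (by omega)
  -- an n-th root of g
  set c : ℂ := g w with hcdef
  have hge : ∀ᶠ z in nhds w, g z ≠ 0 ∧ g z / c ∈ slitPlane := by
    have htc : Tendsto g (nhds w) (nhds c) := hg.continuousAt
    have h1 : ∀ᶠ z in nhds w, g z ≠ 0 := htc.eventually_ne hgw
    have h2 : Tendsto (fun z => g z / c) (nhds w) (nhds 1) := by
      have := htc.div_const c
      rwa [div_self hgw] at this
    have h3 : ∀ᶠ z in nhds w, g z / c ∈ slitPlane :=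
      h2.eventually (isOpen_slitPlane.eventually_mem one_mem_slitPlane)
    exact h1.and h3
  set ρ : ℂ → ℂ := fun z => Complex.exp ((Complex.log (g z / c) + Complex.log c) / n)
    with hρdef
  have hρa : AnalyticAt ℂ ρ w := by
    have hdiv : AnalyticAt ℂ (fun z => g z / c) w := hg.div analyticAt_const hgw
    have hlog : AnalyticAt ℂ (fun z => Complex.log (g z / c)) w := by
      refine hdiv.clog ?_
      rw [div_self hgw]
      exact one_mem_slitPlane
    exact ((hlog.add analyticAt_const).div analyticAt_const hnC).cexp
  have hρn : ∀ᶠ z in nhds w, ρ z ^ n = g z := by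
    filter_upwards [hge] with z hz
    rw [hρdef]
    rw [← Complex.exp_nat_mul, mul_div_cancel₀ _ hnC, Complex.exp_add,
      Complex.exp_log (div_ne_zero hz.1 hgw), Complex.exp_log hgw,
      div_mul_cancel₀ _ hgw]
  have hρw : ρ w ≠ 0 := Complex.exp_ne_zero _
  set φ : ℂ → ℂ := fun z => (z - w) * ρ z with hφdef
  have hfacφ : ∀ᶠ z in nhds w, F z = φ z ^ n := by
    filter_upwards [hfac, hρn] with z h1 h2
    rw [h1, hφdef, mul_pow, h2, smul_eq_mul]
  have hφa : AnalyticAt ℂ φ w := (analyticAt_id.sub analyticAt_const).mul hρa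
  have hφd : HasDerivAt φ (ρ w) w := by
    have h1 : HasDerivAt (fun z : ℂ => z - w) 1 w := (hasDerivAt_id w).sub_const w
    have h2 : HasDerivAt ρ (deriv ρ w) w := hρa.differentiableAt.hasDerivAt
    simpa [Pi.mul_def] using h1.mul h2
  have hφs : HasStrictDerivAt φ (ρ w) w := by
    obtain ⟨pφ, hpφ⟩ := hφa
    have hs := hpφ.hasStrictDerivAt
    have heq := hs.hasDerivAt.unique hφd
    exact heq ▸ hs
  -- local inverse of φ
  set hfe := hφs.hasStrictFDerivAt_equiv hρw with hfedef
  set ψ : ℂ → ℂ := hfe.localInverse φ _ w with hψdef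
  have hright : ∀ᶠ y in nhds (φ w), φ (ψ y) = y := hfe.eventually_right_inverse
  have hψw : ψ (φ w) = w := hfe.localInverse_apply_image
  have hψc : ContinuousAt ψ (φ w) := hfe.localInverse_continuousAt
  have hφw : φ w = 0 := by simp [hφdef]
  have htend : Tendsto ψ (nhds 0) (nhds w) := by
    have := hψc.tendsto
    rw [hψw] at this
    rwa [hφw] at this
  have hbig : ∀ᶠ y in nhds (0:ℂ), φ (ψ y) = y ∧ ψ y ∈ U ∧ F (ψ y) = φ (ψ y) ^ n := by
    have h1 : ∀ᶠ y in nhds (0:ℂ), φ (ψ y) = y := by rwa [hφw] at hright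
    have h2 : ∀ᶠ y in nhds (0:ℂ), ψ y ∈ U ∧ F (ψ y) = φ (ψ y) ^ n :=
      htend.eventually (hUev.and hfacφ)
    exact h1.and h2
  obtain ⟨ε, hε, hball⟩ := Metric.eventually_nhds_iff.1 hbig
  -- two distinct points with the same image
  set ζ : ℂ := ((ε / 2 : ℝ) : ℂ) with hζdef
  have hζ0 : ζ ≠ 0 := by
    simp only [hζdef, ne_eq, Complex.ofReal_eq_zero]
    positivity
  have hζε : dist ζ 0 < ε := by
    rw [dist_zero_right, hζdef, Complex.norm_real, Real.norm_eq_abs,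
      abs_of_pos (by positivity)]
    linarith
  set θ : ℝ := 2 * Real.pi / n with hθdef
  set u : ℂ := Complex.exp (θ * Complex.I) with hudef
  have hu1 : u ^ n = 1 := by
    rw [hudef, ← Complex.exp_nat_mul]
    have : (n : ℂ) * ((θ : ℂ) * Complex.I) = ((2 * Real.pi : ℝ) : ℂ) * Complex.I := by
      rw [hθdef]
      push_cast
      field_simp
    rw [this]
    push_cast
    exact Complex.exp_two_pi_mul_I
  have huabs : ‖u‖ = 1 := Complex.norm_exp_ofReal_mul_I θ
  have hune : u ≠ 1 := by
    intro h
    rw [hudef, Complex.exp_eq_one_iff] at h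
    obtain ⟨k, hk⟩ := h
    have hI : (θ : ℂ) = (k : ℂ) * (2 * Real.pi) := by
      have h2 : (θ : ℂ) * Complex.I = ((k : ℂ) * (2 * Real.pi)) * Complex.I := by
        rw [hk]; ring
      exact mul_right_cancel₀ Complex.I_ne_zero h2
    have hθR : θ = (k : ℝ) * (2 * Real.pi) := by exact_mod_cast hI
    have hn2R : (2:ℝ) ≤ (n:ℝ) := by exact_mod_cast hn2
    have hθpos : 0 < θ := by
      rw [hθdef]
      positivity
    have hθle : θ ≤ Real.pi := by
      rw [hθdef, div_le_iff₀ hnR]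
      nlinarith [Real.pi_pos]
    rcases le_or_gt (k : ℝ) 0 with hk0 | hk0
    · nlinarith [Real.pi_pos]
    · have hk1 : (1:ℝ) ≤ k := by exact_mod_cast (by exact_mod_cast hk0 : (0:ℤ) < k)
      nlinarith [Real.pi_pos]
  set ω : ℂ := u * ζ with hωdef
  have hωε : dist ω 0 < ε := by
    rw [dist_zero_right, hωdef, norm_mul]
    rw [dist_zero_right] at hζε
    have : ‖u‖ = 1 := huabs
    rw [this, one_mul]
    exact hζε
  have hωn : ω ^ n = ζ ^ n := by rw [hωdef, mul_pow, hu1, one_mul]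
  obtain ⟨hφζ, hζU, hFζ⟩ := hball hζε
  obtain ⟨hφω, hωU, hFω⟩ := hball hωε
  have hfeq : f (ψ ζ) = f (ψ ω) := by
    have h1 : F (ψ ζ) = ζ ^ n := by rw [hFζ, hφζ]
    have h2 : F (ψ ω) = ω ^ n := by rw [hFω, hφω]
    have h3 : F (ψ ζ) = F (ψ ω) := by rw [h1, h2, hωn]
    have h4 : f (ψ ζ) - f w = f (ψ ω) - f w := h3
    exact sub_left_inj.1 h4
  have : ψ ζ = ψ ω := inj hζU hωU hfeq
  have hζω : ζ = ω := by rw [← hφζ, ← hφω, this]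
  rw [hωdef] at hζω
  apply hune
  have h5 : u * ζ = 1 * ζ := by rw [one_mul, ← hζω]
  exact mul_right_cancel₀ hζ0 h5


end InjPart

section MainProof

open Complex Filter

/-- Existence of a holomorphic lift of `g` through the covering `f`. -/
lemma exists_holo_lift (Ω : Set ℂ) (h0Ω : (0:ℂ) ∈ Ω) (f g : ℂ → ℂ)
    (hfhol : DifferentiableOn ℂ f (ball (0:ℂ) 1))
    (hghol : DifferentiableOn ℂ g (ball (0:ℂ) 1))
    (hfm : Set.MapsTo f (ball (0:ℂ) 1) Ω)
    (hfc : IsCoveringMap (Set.MapsTo.restrict f (ball (0:ℂ) 1) Ω hfm))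
    (hgm : Set.MapsTo g (ball (0:ℂ) 1) Ω)
    (hf0 : f 0 = 0) (hg0 : g 0 = 0) :
    ∃ h : ℂ → ℂ, DifferentiableOn ℂ h (ball (0:ℂ) 1) ∧
      Set.MapsTo h (ball (0:ℂ) 1) (ball (0:ℂ) 1) ∧ h 0 = 0 ∧
      ∀ z ∈ ball (0:ℂ) 1, f (h z) = g z := by
  classical
  have h0D : (0:ℂ) ∈ ball (0:ℂ) 1 := mem_ball_self one_pos
  set γ : ℂ → ↥Ω := fun z => if hz : z ∈ ball (0:ℂ) 1 then ⟨g z, hgm hz⟩ else ⟨0, h0Ω⟩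
    with hγdef
  have hγc : ContinuousOn γ (ball (0:ℂ) 1) := by
    rw [Topology.IsInducing.subtypeVal.continuousOn_iff]
    refine (hghol.continuousOn).congr ?_
    intro z hz
    simp only [Function.comp, hγdef, dif_pos hz]
  set e₀ : ↥(ball (0:ℂ) 1) := ⟨0, h0D⟩ with he₀def
  have hpe₀ : Set.MapsTo.restrict f (ball (0:ℂ) 1) Ω hfm e₀ = γ 0 := by
    apply Subtype.ext
    simp only [Set.MapsTo.val_restrict_apply, hγdef, dif_pos h0D, hf0, hg0, he₀def]
  obtain ⟨h, hhc, hh0, hhl⟩ := disk_lift hfc hγc e₀ hpe₀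
  set h' : ℂ → ℂ := fun z => ((h z : ↥(ball (0:ℂ) 1)) : ℂ) with h'def
  have hmaps : Set.MapsTo h' (ball (0:ℂ) 1) (ball (0:ℂ) 1) := fun z _ => (h z).2
  have hcont : ContinuousOn h' (ball (0:ℂ) 1) := continuous_subtype_val.comp_continuousOn hhc
  have hzero : h' 0 = 0 := by rw [h'def]; simp only [hh0, he₀def]
  have hlift : ∀ z ∈ ball (0:ℂ) 1, f (h' z) = g z := by
    intro z hz
    have := congrArg Subtype.val (hhl z hz)
    simpa only [Set.MapsTo.val_restrict_apply, hγdef, dif_pos hz] using this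
  refine ⟨h', ?_, hmaps, hzero, hlift⟩
  intro z₀ hz₀
  suffices hda : DifferentiableAt ℂ h' z₀ by exact hda.differentiableWithinAt
  set w₀ : ℂ := h' z₀ with hw₀def
  have hw₀D : w₀ ∈ ball (0:ℂ) 1 := hmaps hz₀
  have hfa : AnalyticAt ℂ f w₀ := hfhol.analyticAt (isOpen_ball.mem_nhds hw₀D)
  -- local injectivity of f near w₀
  obtain ⟨U, hUo, hUm, hUinj⟩ :=
    hfc.isLocalHomeomorph.isLocallyInjective (⟨w₀, hw₀D⟩ : ↥(ball (0:ℂ) 1))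
  obtain ⟨V, hVo, hVe⟩ := isOpen_induced_iff.1 hUo
  have hw₀V : w₀ ∈ V := by
    have : (⟨w₀, hw₀D⟩ : ↥(ball (0:ℂ) 1)) ∈ U := hUm
    rw [← hVe] at this
    exact this
  have hinj : Set.InjOn f (V ∩ ball (0:ℂ) 1) := by
    intro a ha b hb hab
    have haU : (⟨a, ha.2⟩ : ↥(ball (0:ℂ) 1)) ∈ U := by rw [← hVe]; exact ha.1
    have hbU : (⟨b, hb.2⟩ : ↥(ball (0:ℂ) 1)) ∈ U := by rw [← hVe]; exact hb.1
    have : Set.MapsTo.restrict f _ _ hfm ⟨a, ha.2⟩ = Set.MapsTo.restrict f _ _ hfm ⟨b, hb.2⟩ :=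
      Subtype.ext (by simpa only [Set.MapsTo.val_restrict_apply] using hab)
    exact congrArg Subtype.val (hUinj haU hbU this)
  have hnz : deriv f w₀ ≠ 0 :=
    deriv_ne_zero_of_injOn hfa
      (Filter.inter_mem (hVo.mem_nhds hw₀V) (isOpen_ball.mem_nhds hw₀D)) hinj
  -- local holomorphic inverse of f at w₀
  obtain ⟨pf, hpf⟩ := hfa
  have hstr : HasStrictDerivAt f (deriv f w₀) w₀ := by
    have hs := hpf.hasStrictDerivAt
    rw [hs.hasDerivAt.deriv]
    exact hs
  set hfe := hstr.hasStrictFDerivAt_equiv hnz with hfedef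
  set ψ : ℂ → ℂ := hfe.localInverse f _ w₀ with hψdef
  have hleft : ∀ᶠ x in nhds w₀, ψ (f x) = x := hfe.eventually_left_inverse
  have hψd : DifferentiableAt ℂ ψ (f w₀) :=
    hfe.to_localInverse.differentiableAt
  have hca : ContinuousAt h' z₀ := hcont.continuousAt (isOpen_ball.mem_nhds hz₀)
  have hev : h' =ᶠ[nhds z₀] fun z => ψ (g z) := by
    have ev1 : ∀ᶠ z in nhds z₀, ψ (f (h' z)) = h' z := hca.tendsto.eventually hleft
    have ev2 : ∀ᶠ z in nhds z₀, f (h' z) = g z :=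
      eventually_of_mem (isOpen_ball.mem_nhds hz₀) hlift
    filter_upwards [ev1, ev2] with z h1 h2
    rw [← h1, h2]
  have hgd : DifferentiableAt ℂ g z₀ := hghol.differentiableAt (isOpen_ball.mem_nhds hz₀)
  have hψg : DifferentiableAt ℂ (fun z => ψ (g z)) z₀ := by
    have : f w₀ = g z₀ := hlift z₀ hz₀
    exact DifferentiableAt.comp z₀ (this ▸ hψd) hgd
  exact hev.differentiableAt_iff.2 hψg

end MainProof


/-- The homomorphism induced on fundamental groups by a continuous map. -/
noncomputable def pi1map {X Y : Type} [TopologicalSpace X] [TopologicalSpace Y]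
    (φ : C(X, Y)) (x : X) : FundamentalGroup X x →* FundamentalGroup Y (φ x) :=
  Functor.mapEnd (FundamentalGroupoid.mk x)
    (πₘ (TopCat.ofHom φ) : FundamentalGroupoid X ⥤ FundamentalGroupoid Y)

/-- `f` restricted to `U` is a covering map onto `Ω`. -/
def IsCoveringOnto {E F : Type} [TopologicalSpace E] [TopologicalSpace F]
    (f : E → F) (U : Set E) (Ω : Set F) : Prop :=
  Set.SurjOn f U Ω ∧
    ∃ h : Set.MapsTo f U Ω, IsCoveringMap (Set.MapsTo.restrict f U Ω h)

/-- uniqueness of the normalized holomorphic covering map `𝔻 → Ω`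
fixing `0` with positive real derivative at `0`. -/
theorem covering_map_unique_of_normalized
    (Ω : Set ℂ) (hΩopen : IsOpen Ω) (hΩconn : IsConnected Ω) (h0Ω : (0 : ℂ) ∈ Ω)
    (f g : ℂ → ℂ)
    (hfhol : DifferentiableOn ℂ f (ball (0 : ℂ) 1))
    (hghol : DifferentiableOn ℂ g (ball (0 : ℂ) 1))
    (hfcov : IsCoveringOnto f (ball (0 : ℂ) 1) Ω)
    (hgcov : IsCoveringOnto g (ball (0 : ℂ) 1) Ω)
    (hf0 : f 0 = 0) (hg0 : g 0 = 0)
    (hfderiv : ∃ lam : ℝ, 0 < lam ∧ deriv f 0 = (lam : ℂ))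
    (hgderiv : ∃ lam : ℝ, 0 < lam ∧ deriv g 0 = (lam : ℂ)) :
    Set.EqOn f g (ball (0 : ℂ) 1) := by
  obtain ⟨lf, hlf, hdf⟩ := hfderiv
  obtain ⟨lg, hlg, hdg⟩ := hgderiv
  obtain ⟨-, hfm, hfc⟩ := hfcov
  obtain ⟨-, hgm, hgc⟩ := hgcov
  have h0D : (0:ℂ) ∈ ball (0:ℂ) 1 := mem_ball_self one_pos
  -- lift of g through f, and lift of f through g
  obtain ⟨h, hhd, hhm, hh0, hhl⟩ :=
    exists_holo_lift Ω h0Ω f g hfhol hghol hfm hfc hgm hf0 hg0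
  obtain ⟨k, hkd, hkm, hk0, hkl⟩ :=
    exists_holo_lift Ω h0Ω g f hghol hfhol hgm hgc hfm hg0 hf0
  -- derivative computations at 0
  have hfd0 : DifferentiableAt ℂ f 0 := hfhol.differentiableAt (isOpen_ball.mem_nhds h0D)
  have hgd0 : DifferentiableAt ℂ g 0 := hghol.differentiableAt (isOpen_ball.mem_nhds h0D)
  have hhd0 : DifferentiableAt ℂ h 0 := hhd.differentiableAt (isOpen_ball.mem_nhds h0D)
  have hkd0 : DifferentiableAt ℂ k 0 := hkd.differentiableAt (isOpen_ball.mem_nhds h0D)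
  have hchain : deriv g 0 = deriv f 0 * deriv h 0 := by
    have hev : g =ᶠ[nhds 0] (f ∘ h) :=
      Filter.eventually_of_mem (isOpen_ball.mem_nhds h0D) fun z hz => (hhl z hz).symm
    have hcomp : HasDerivAt (f ∘ h) (deriv f 0 * deriv h 0) 0 := by
      have h1 : HasDerivAt f (deriv f 0) (h 0) := by rw [hh0]; exact hfd0.hasDerivAt
      exact HasDerivAt.comp 0 h1 hhd0.hasDerivAt
    rw [hev.deriv_eq, hcomp.deriv]
  have hchain' : deriv f 0 = deriv g 0 * deriv k 0 := by
    have hev : f =ᶠ[nhds 0] (g ∘ k) :=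
      Filter.eventually_of_mem (isOpen_ball.mem_nhds h0D) fun z hz => (hkl z hz).symm
    have hcomp : HasDerivAt (g ∘ k) (deriv g 0 * deriv k 0) 0 := by
      have h1 : HasDerivAt g (deriv g 0) (k 0) := by rw [hk0]; exact hgd0.hasDerivAt
      exact HasDerivAt.comp 0 h1 hkd0.hasDerivAt
    rw [hev.deriv_eq, hcomp.deriv]
  -- the derivative of h at 0 is the positive real number lg / lf
  have hlf0 : (lf : ℂ) ≠ 0 := Complex.ofReal_ne_zero.2 hlf.ne'
  have hlg0 : (lg : ℂ) ≠ 0 := Complex.ofReal_ne_zero.2 hlg.ne'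
  have hdh : deriv h 0 = ((lg / lf : ℝ) : ℂ) := by
    rw [hdf, hdg] at hchain
    have h2 : deriv h 0 = (lg : ℂ) / (lf : ℂ) := by
      rw [eq_div_iff hlf0, mul_comm]
      exact hchain.symm
    rw [h2]
    push_cast
    ring
  have hdk : deriv k 0 = ((lf / lg : ℝ) : ℂ) := by
    rw [hdf, hdg] at hchain'
    have h2 : deriv k 0 = (lf : ℂ) / (lg : ℂ) := by
      rw [eq_div_iff hlg0, mul_comm]
      exact hchain'.symm
    rw [h2]
    push_cast
    ring
  -- Schwarz inequality for both lifts
  have hsh : ‖deriv h 0‖ ≤ 1 :=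
    Complex.norm_deriv_le_one_of_mapsTo_ball hhd
      (by rw [hh0]; exact fun z hz => ball_subset_closedBall (hhm hz)) one_pos
  have hsk : ‖deriv k 0‖ ≤ 1 :=
    Complex.norm_deriv_le_one_of_mapsTo_ball hkd
      (by rw [hk0]; exact fun z hz => ball_subset_closedBall (hkm hz)) one_pos
  have hle1 : lg / lf ≤ 1 := by
    rw [hdh, Complex.norm_real, Real.norm_eq_abs, abs_of_pos (by positivity)] at hsh
    exact hsh
  have hle2 : lf / lg ≤ 1 := by
    rw [hdk, Complex.norm_real, Real.norm_eq_abs, abs_of_pos (by positivity)] at hsk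
    exact hsk
  have hlfg : lf = lg := by
    rw [div_le_one hlf] at hle1
    rw [div_le_one hlg] at hle2
    linarith
  have hder1 : deriv h 0 = 1 := by
    rw [hdh, hlfg, div_self hlg.ne']
    norm_num
  -- equality case of the Schwarz lemma: h is the identity
  have hds : dslope h 0 0 = deriv h 0 := dslope_same h 0
  have h_eq : ‖dslope h 0 0‖ = 1 / 1 := by
    rw [hds, hder1]
    norm_num
  have hmaps' : Set.MapsTo h (ball (0:ℂ) 1) (ball (h 0) 1) := by rw [hh0]; exact hhm
  have haff := Complex.affine_of_mapsTo_ball_of_norm_dslope_eq_div hhd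
    (fun z hz => ball_subset_closedBall (hmaps' hz)) h0D h_eq
  intro z hz
  have h1 : h z = z := by
    have h2 := haff hz
    rw [hh0, hds, hder1] at h2
    simpa using h2
  rw [← hhl z hz, h1]
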